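/- arXiv:2404.07609 — 2 statements merged into one kernel-verified Lean document; each statement's English description precedes it below -/
import Mathlib

section
/- Let P be an n×n symmetric doubly stochastic matrix with connected graph and positive diagonal, E ∈ ℝ^{n×d}, g ∈ ℝ^n. Then x ∈ ℝ^d satisfies 1ᵀ(Ex + g) = 0 if and only if there exists y ∈ ℝ^n with Ex + (I−P)y + g = 0. -/
open Matrix Finset

/-- The undirected graph associated with a nonnegative matrix `P`. -/
def assocGraph {n : ℕ} (P : Matrix (Fin n) (Fin n) ℝ) : SimpleGraph (Fin n) where
  Adj i j := i ≠ j ∧ (0 < P i j ∨ 0 < P j i)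
  symm := by constructor; intro i j h; exact ⟨h.1.symm, h.2.symm⟩
  loopless := by constructor; intro i h; exact h.1 rfl

theorem equality_constraint_reformulation
    {n d : ℕ} (P : Matrix (Fin n) (Fin n) ℝ)
    (hsymm : P.IsSymm)
    (hnonneg : ∀ i j, 0 ≤ P i j)
    (hrow : ∀ i, ∑ j, P i j = 1)
    (hdiag : ∀ i, 0 < P i i)
    (hconn : (assocGraph P).Connected)
    (E : Matrix (Fin n) (Fin d) ℝ) (g : Fin n → ℝ)
    (x : Fin d → ℝ) :
    ∑ i, (E.mulVec x i + g i) = 0 ↔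
      ∃ y : Fin n → ℝ, ∀ i, E.mulVec x i + (1 - P).mulVec y i + g i = 0 := by
  classical
  have hcol : ∀ j, ∑ i, P i j = 1 := by
    intro j
    calc ∑ i, P i j = ∑ i, P j i := Finset.sum_congr rfl fun i _ => hsymm.apply j i
      _ = 1 := hrow j
  -- sum of (1-P).mulVec y is zero
  have hMsum : ∀ y : Fin n → ℝ, ∑ i, (1 - P).mulVec y i = 0 := by
    intro y
    simp only [Matrix.mulVec, dotProduct, Matrix.sub_apply]
    rw [Finset.sum_comm]
    refine Finset.sum_eq_zero fun j _ => ?_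
    rw [← Finset.sum_mul]
    have h1 : ∑ i, ((1 : Matrix (Fin n) (Fin n) ℝ) i j - P i j) = 0 := by
      rw [Finset.sum_sub_distrib, hcol j]
      simp [Matrix.one_apply]
    rw [h1, zero_mul]
  constructor
  · -- forward direction
    intro hsum
    rcases Nat.eq_zero_or_pos n with h0 | hpos
    · exact ⟨0, fun i => absurd i.isLt (by omega)⟩
    haveI : Nonempty (Fin n) := ⟨⟨0, hpos⟩⟩
    -- kernel of (1-P).mulVecLin is span of constant vector
    have hker : LinearMap.ker (1 - P).mulVecLin
        = Submodule.span ℝ {(fun _ => (1:ℝ) : Fin n → ℝ)} := by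
      apply le_antisymm
      · intro z hz
        rw [LinearMap.mem_ker, Matrix.mulVecLin_apply, Matrix.sub_mulVec,
          Matrix.one_mulVec, sub_eq_zero] at hz
        -- hz : z = P.mulVec z
        have hPz : ∀ i, ∑ k, P i k * z k = z i := by
          intro i
          have := congrFun hz i
          simp only [Matrix.mulVec, dotProduct] at this
          exact this.symm
        obtain ⟨i0, hi0⟩ := Finite.exists_max z
        set m := z i0 with hm
        have key : ∀ i, z i = m → ∀ j, 0 < P i j → z j = m := by
          intro i hi j hPij
          by_contra hne
          have hlt : z j < m := lt_of_le_of_ne (hi0 j) hne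
          have hsumlt : ∑ k, P i k * z k < ∑ k, P i k * m := by
            apply Finset.sum_lt_sum
            · intro k _
              exact mul_le_mul_of_nonneg_left (hi0 k) (hnonneg i k)
            · exact ⟨j, Finset.mem_univ j, by nlinarith⟩
          have hPm : ∑ k, P i k * m = m := by
            rw [← Finset.sum_mul, hrow i, one_mul]
          rw [hPz i, hi, hPm] at hsumlt
          exact lt_irrefl m hsumlt
        have step : ∀ i j : Fin n, (assocGraph P).Adj i j → z i = m → z j = m := by
          intro i j hadj hi
          have hp : 0 < P i j := by
            rcases hadj.2 with h | h
            · exact h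
            · rwa [hsymm.apply i j] at h
          exact key i hi j hp
        have hwalk : ∀ {a b : Fin n} (_ : (assocGraph P).Walk a b), z a = m → z b = m := by
          intro a b w
          induction w with
          | nil => exact id
          | cons h p ih => exact fun ha => ih (step _ _ h ha)
        have hall : ∀ j, z j = m := fun j =>
          (hconn.preconnected i0 j).elim fun w => hwalk w rfl
        rw [Submodule.mem_span_singleton]
        exact ⟨m, by funext j; simp [hall j]⟩
      · rw [Submodule.span_le, Set.singleton_subset_iff]
        simp only [SetLike.mem_coe, LinearMap.mem_ker, Matrix.mulVecLin_apply]
        funext i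
        simp only [Matrix.sub_mulVec, Matrix.one_mulVec, Pi.sub_apply,
          Matrix.mulVec, dotProduct]
        simp [Matrix.one_apply, hrow i]
    -- the sum functional
    let l : (Fin n → ℝ) →ₗ[ℝ] ℝ :=
      { toFun := fun z => ∑ i, z i
        map_add' := by intro a b; simp [Finset.sum_add_distrib]
        map_smul' := by intro c a; simp [Finset.mul_sum] }
    have hlsurj : Function.Surjective l := by
      intro r
      refine ⟨Pi.single (⟨0, hpos⟩ : Fin n) r, ?_⟩
      simp [l, Finset.sum_pi_single']
    have hrange_le : LinearMap.range (1 - P).mulVecLin ≤ LinearMap.ker l := by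
      rintro _ ⟨y, rfl⟩
      simp only [LinearMap.mem_ker, Matrix.mulVecLin_apply]
      exact hMsum y
    have hfr1 : Module.finrank ℝ (LinearMap.range (1 - P).mulVecLin)
        + Module.finrank ℝ (LinearMap.ker (1 - P).mulVecLin) = n := by
      rw [LinearMap.finrank_range_add_finrank_ker]
      simp [Module.finrank_pi]
    have hone : (fun _ => (1:ℝ) : Fin n → ℝ) ≠ 0 := by
      intro h
      have := congrFun h (⟨0, hpos⟩ : Fin n)
      simp at this
    have hkerdim : Module.finrank ℝ (LinearMap.ker (1 - P).mulVecLin) = 1 := by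
      rw [hker]
      exact finrank_span_singleton hone
    have hfr2 : Module.finrank ℝ (LinearMap.range l)
        + Module.finrank ℝ (LinearMap.ker l) = n := by
      rw [LinearMap.finrank_range_add_finrank_ker]
      simp [Module.finrank_pi]
    have hrl : Module.finrank ℝ (LinearMap.range l) = 1 := by
      rw [LinearMap.range_eq_top.mpr hlsurj]
      simp
    have heq : LinearMap.range (1 - P).mulVecLin = LinearMap.ker l := by
      apply Submodule.eq_of_le_of_finrank_eq hrange_le
      omega
    -- conclude
    have hz : (fun i => -(E.mulVec x i + g i)) ∈ LinearMap.ker l := by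
      simp only [LinearMap.mem_ker]
      show ∑ i, -(E.mulVec x i + g i) = 0
      rw [Finset.sum_neg_distrib, hsum, neg_zero]
    rw [← heq] at hz
    obtain ⟨y, hy⟩ := hz
    refine ⟨y, fun i => ?_⟩
    have := congrFun hy i
    simp only [Matrix.mulVecLin_apply] at this
    rw [this]
    ring
  · rintro ⟨y, hy⟩
    have h0 : ∑ i, (E.mulVec x i + (1 - P).mulVec y i + g i) = 0 := by
      simp [hy]
    calc ∑ i, (E.mulVec x i + g i)
        = ∑ i, (E.mulVec x i + (1 - P).mulVec y i + g i) - ∑ i, (1 - P).mulVec y i := by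
          rw [← Finset.sum_sub_distrib]
          exact Finset.sum_congr rfl fun i _ => by ring
      _ = 0 := by rw [h0, hMsum y]; ring
end

section
/- Let φ : ℝ^n → ℝ be convex and differentiable with L-Lipschitz gradient, and let y* minimize φ. The accelerated dual averaging iteration with weights γ_t = γ(t+1), Γ_t = Σ_{τ=1}^t γ_τ, and γ ≤ 1/(2L), produces iterates ŷ^{(t)} satisfying φ(ŷ^{(t)}) − φ(y*) ≤ ‖y^{(0)} − y*‖²/(2Γ_t) = 2L‖y^{(0)} − y*‖²/(t(t+3)) for all t ≥ 2, when γ = 1/(2L). -/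
open Set Filter Topology
open scoped RealInnerProductSpace

section Aux
variable {E : Type*} [NormedAddCommGroup E] [InnerProductSpace ℝ E] [CompleteSpace E]

private lemma line_hasDerivAt (φ : E → ℝ) (φ' : E → E) (hgrad : ∀ x, HasGradientAt φ (φ' x) x)
    (x d : E) (s : ℝ) :
    HasDerivAt (fun s : ℝ => φ (x + s • d)) (⟪φ' (x + s • d), d⟫) s := by
  have hline : HasDerivAt (fun s : ℝ => x + s • d) d s := by
    simpa using ((hasDerivAt_id s).smul_const d).const_add x
  have := ((hgrad (x + s • d)).hasFDerivAt).comp_hasDerivAt s hline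
  simp [InnerProductSpace.toDual_apply_apply] at this; exact this

private lemma grad_convex_ineq (φ : E → ℝ) (φ' : E → E) (hconv : ConvexOn ℝ Set.univ φ)
    (hgrad : ∀ x, HasGradientAt φ (φ' x) x) (x y : E) :
    φ x + ⟪φ' x, y - x⟫ ≤ φ y := by
  set d := y - x with hd
  have hder : HasDerivAt (fun s : ℝ => φ (x + s • d)) (⟪φ' x, d⟫) 0 := by
    simpa using line_hasDerivAt φ φ' hgrad x d 0
  have htend : Tendsto (slope (fun s : ℝ => φ (x + s • d)) 0) (𝓝[>] 0) (𝓝 ⟪φ' x, d⟫) :=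
    (hasDerivAt_iff_tendsto_slope.1 hder).mono_left
      (nhdsWithin_mono 0 (fun s hs => ne_of_gt hs))
  have hbound : ∀ᶠ s in 𝓝[>] (0:ℝ), slope (fun s : ℝ => φ (x + s • d)) 0 s ≤ φ y - φ x := by
    filter_upwards [Ioo_mem_nhdsGT_of_mem (by norm_num : (0:ℝ) ∈ Ico (0:ℝ) 1)] with s hs
    have h0 : (0:ℝ) < s := hs.1
    have h1 : s < 1 := hs.2
    have hcx : x + s • d = (1 - s) • x + s • y := by
      rw [hd]; module
    have := hconv.2 (mem_univ x) (mem_univ y) (by linarith : (0:ℝ) ≤ 1 - s) h0.le (by ring)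
    rw [slope_def_field]
    have hφ : φ (x + s • d) ≤ (1 - s) * φ x + s * φ y := by rw [hcx]; simpa using this
    have : (φ (x + s • d) - φ (x + (0:ℝ) • d)) / s ≤ φ y - φ x := by
      rw [div_le_iff₀ h0]
      simp only [zero_smul, add_zero]
      nlinarith
    simpa [div_eq_inv_mul] using this
  have := le_of_tendsto htend hbound
  linarith

private lemma descent_lemma (φ : E → ℝ) (φ' : E → E)
    (hgrad : ∀ x, HasGradientAt φ (φ' x) x) (L : ℝ) (hL : 0 < L)
    (hlip : ∀ x y, ‖φ' x - φ' y‖ ≤ L * ‖x - y‖) (x y : E) :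
    φ y ≤ φ x + ⟪φ' x, y - x⟫ + L / 2 * ‖y - x‖ ^ 2 := by
  set d := y - x with hd
  have hcontg : Continuous φ' := by
    have : LipschitzWith (Real.toNNReal L) φ' := by
      apply LipschitzWith.of_dist_le_mul
      intro a b
      simpa [dist_eq_norm, Real.coe_toNNReal L hL.le] using hlip a b
    exact this.continuous
  have hder : ∀ s : ℝ, HasDerivAt (fun s : ℝ => φ (x + s • d)) (⟪φ' (x + s • d), d⟫) s :=
    line_hasDerivAt φ φ' hgrad x d
  have hcont : Continuous fun s : ℝ => ⟪φ' (x + s • d), d⟫ := by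
    exact (hcontg.comp (by continuity)).inner continuous_const
  have hint : IntervalIntegrable (fun s : ℝ => ⟪φ' (x + s • d), d⟫) MeasureTheory.volume 0 1 :=
    hcont.intervalIntegrable 0 1
  have hFTC : ∫ s in (0:ℝ)..1, ⟪φ' (x + s • d), d⟫ = φ (x + (1:ℝ) • d) - φ (x + (0:ℝ) • d) :=
    intervalIntegral.integral_eq_sub_of_hasDerivAt (fun s _ => hder s) hint
  have hmono : ∫ s in (0:ℝ)..1, ⟪φ' (x + s • d), d⟫ ≤
      ∫ s in (0:ℝ)..1, (⟪φ' x, d⟫ + (L * ‖d‖ ^ 2) * s) := by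
    apply intervalIntegral.integral_mono_on (by norm_num) hint
    · exact (continuous_const.add (continuous_const.mul continuous_id)).intervalIntegrable 0 1
    · intro s hs
      have h1 : ⟪φ' (x + s • d), d⟫ - ⟪φ' x, d⟫ = ⟪φ' (x + s • d) - φ' x, d⟫ := by
        rw [inner_sub_left]
      have h2 : ⟪φ' (x + s • d) - φ' x, d⟫ ≤ ‖φ' (x + s • d) - φ' x‖ * ‖d‖ :=
        real_inner_le_norm _ _
      have h3 : ‖φ' (x + s • d) - φ' x‖ ≤ L * (s * ‖d‖) := by
        have := hlip (x + s • d) x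
        rw [add_sub_cancel_left, norm_smul, Real.norm_eq_abs, abs_of_nonneg hs.1] at this
        linarith
      have h5 : ‖φ' (x + s • d) - φ' x‖ * ‖d‖ ≤ (L * ‖d‖ ^ 2) * s := by
        nlinarith [norm_nonneg d, mul_le_mul_of_nonneg_right h3 (norm_nonneg d)]
      linarith
  have hval : ∫ s in (0:ℝ)..1, (⟪φ' x, d⟫ + (L * ‖d‖ ^ 2) * s) =
      ⟪φ' x, d⟫ + L / 2 * ‖d‖ ^ 2 := by
    rw [intervalIntegral.integral_add (continuous_const.intervalIntegrable 0 1)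
      ((continuous_mul_left _).intervalIntegrable 0 1),
      intervalIntegral.integral_const, intervalIntegral.integral_const_mul,
      integral_id]
    norm_num; ring
  have h1d : x + (1:ℝ) • d = y := by rw [hd]; module
  have h0d : x + (0:ℝ) • d = x := by module
  rw [h1d, h0d] at hFTC
  linarith

end Aux

open Set

set_option maxHeartbeats 2000000 in
theorem accelerated_dual_averaging_rate
    {n : ℕ}
    (φ : EuclideanSpace ℝ (Fin n) → ℝ)
    (φ' : EuclideanSpace ℝ (Fin n) → EuclideanSpace ℝ (Fin n))
    (hconv : ConvexOn ℝ Set.univ φ)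
    (hgrad : ∀ x, HasGradientAt φ (φ' x) x)
    (L : ℝ) (hL : 0 < L)
    (hlip : ∀ x y, ‖φ' x - φ' y‖ ≤ L * ‖x - y‖)
    (ystar : EuclideanSpace ℝ (Fin n)) (hmin : ∀ y, φ ystar ≤ φ y)
    (γ : ℝ) (hγ : γ = 1 / (2 * L))
    (y z yh : ℕ → EuclideanSpace ℝ (Fin n))
    (hz0 : z 0 = y 0) (hyh0 : yh 0 = y 0)
    (hy : ∀ t : ℕ, 1 ≤ t →
        y t = (1 - (γ * (t + 1)) / (γ * t * (t + 3) / 2)) • yh (t - 1)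
              + ((γ * (t + 1)) / (γ * t * (t + 3) / 2)) • z (t - 1))
    (hz : ∀ t : ℕ, 1 ≤ t → z t = z (t - 1) - (γ * (t + 1)) • φ' (y t))
    (hyh : ∀ t : ℕ, 1 ≤ t →
        yh t = (1 - (γ * (t + 1)) / (γ * t * (t + 3) / 2)) • yh (t - 1)
              + ((γ * (t + 1)) / (γ * t * (t + 3) / 2)) • z t) :
    ∀ t : ℕ, 2 ≤ t →
      φ (yh t) - φ ystar ≤ 2 * L * ‖y 0 - ystar‖ ^ 2 / (t * (t + 3)) := by
  have hγpos : 0 < γ := by rw [hγ]; positivity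
  -- per-step energy decrease
  have step : ∀ s : ℕ,
      γ * ((s:ℝ) + 1) * ((s:ℝ) + 1 + 3) / 2 * (φ (yh (s+1)) - φ ystar)
        + ‖z (s+1) - ystar‖ ^ 2 / 2
      ≤ γ * (s:ℝ) * ((s:ℝ) + 3) / 2 * (φ (yh s) - φ ystar)
        + ‖z s - ystar‖ ^ 2 / 2 := by
    intro s
    have hy1 := hy (s+1) (by omega)
    have hz1 := hz (s+1) (by omega)
    have hyh1 := hyh (s+1) (by omega)
    simp only [Nat.add_sub_cancel] at hy1 hz1 hyh1
    push_cast at hy1 hz1 hyh1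
    set g := φ' (y (s+1)) with hg
    set A := γ * ((s:ℝ) + 1 + 1) with hA_def
    set G1 := γ * ((s:ℝ) + 1) * ((s:ℝ) + 1 + 3) / 2 with hG1_def
    have hRnn : (0:ℝ) ≤ (s:ℝ) := Nat.cast_nonneg s
    have hApos : 0 < A := by rw [hA_def]; exact mul_pos hγpos (by positivity)
    have hG1pos : 0 < G1 := by
      rw [hG1_def]
      exact div_pos (mul_pos (mul_pos hγpos (by positivity)) (by positivity)) two_pos
    have hG1ne : G1 ≠ 0 := ne_of_gt hG1pos
    have hG0nn : 0 ≤ G1 - A := by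
      rw [hA_def, hG1_def]
      nlinarith [mul_nonneg (mul_nonneg hγpos.le hRnn) hRnn, mul_nonneg hγpos.le hRnn]
    rw [hz1] at hyh1
    -- vector identities
    have hv1 : yh (s+1) - y (s+1) = (-(A/G1*A)) • g := by
      rw [hyh1, hy1]; match_scalars <;> ring
    have hv2 : (G1 - A) • (y (s+1) - yh s) + A • (y (s+1) - ystar) = A • (z s - ystar) := by
      rw [hy1]; match_scalars <;> (field_simp; try ring)
    -- inner product facts
    have hv1inner : ⟪g, yh (s+1) - y (s+1)⟫ = -(A/G1*A) * ‖g‖ ^ 2 := by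
      rw [hv1, real_inner_smul_right, real_inner_self_eq_norm_sq]
    have hv1norm : ‖yh (s+1) - y (s+1)‖ ^ 2 = (A/G1*A)^2 * ‖g‖ ^ 2 := by
      rw [hv1, norm_smul, mul_pow, Real.norm_eq_abs, sq_abs]; ring
    have hF4 : (G1 - A) * ⟪g, y (s+1) - yh s⟫ + A * ⟪g, y (s+1) - ystar⟫
        = A * ⟪g, z s - ystar⟫ := by
      have := congrArg (fun v => ⟪g, v⟫) hv2
      simp only [inner_add_right, real_inner_smul_right] at this
      exact this
    have hF5 : ‖z (s+1) - ystar‖ ^ 2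
        = ‖z s - ystar‖ ^ 2 - 2*(A*⟪g, z s - ystar⟫) + A^2*‖g‖ ^ 2 := by
      have hzz : z (s+1) - ystar = (z s - ystar) - A • g := by rw [hz1]; module
      rw [hzz, norm_sub_sq_real, real_inner_smul_right, real_inner_comm, norm_smul,
        mul_pow, Real.norm_eq_abs, sq_abs]
      try ring
    -- step-size condition
    have hLAA : L * A * A ≤ G1 := by
      have h24 : ((s:ℝ)+2)^2 ≤ ((s:ℝ)+1)*((s:ℝ)+4) := by nlinarith
      have hAval : A = ((s:ℝ)+2)/(2*L) := by rw [hA_def, hγ]; ring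
      have hG1val : G1 = ((s:ℝ)+1)*((s:ℝ)+4)/(4*L) := by rw [hG1_def, hγ]; ring
      have hLA : L * A * A = ((s:ℝ)+2)^2/(4*L) := by
        rw [hAval]; field_simp; ring
      rw [hLA, hG1val]
      gcongr
    have hLc : L * (A/G1*A) ≤ 1 := by
      rw [show L*(A/G1*A) = L*A*A/G1 by ring, div_le_one hG1pos]
      exact hLAA
    have hcnn : (0:ℝ) ≤ A/G1*A := by positivity
    -- descent lemma
    have hdesc := descent_lemma φ φ' hgrad L hL hlip (y (s+1)) (yh (s+1))
    rw [← hg, hv1inner, hv1norm] at hdesc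
    have key1 : φ (yh (s+1)) ≤ φ (y (s+1)) - (A/G1*A)/2 * ‖g‖ ^ 2 := by
      nlinarith [mul_nonneg (mul_nonneg (sub_nonneg.2 hLc) hcnn) (sq_nonneg ‖g‖)]
    -- convexity
    have hneg1 : ⟪g, yh s - y (s+1)⟫ = -⟪g, y (s+1) - yh s⟫ := by
      rw [← inner_neg_right, neg_sub]
    have hneg2 : ⟪g, ystar - y (s+1)⟫ = -⟪g, y (s+1) - ystar⟫ := by
      rw [← inner_neg_right, neg_sub]
    have hcx1 := grad_convex_ineq φ φ' hconv hgrad (y (s+1)) (yh s)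
    have hcx2 := grad_convex_ineq φ φ' hconv hgrad (y (s+1)) ystar
    rw [← hg] at hcx1 hcx2
    have hcx1' : φ (y (s+1)) ≤ φ (yh s) + ⟪g, y (s+1) - yh s⟫ := by
      rw [hneg1] at hcx1; linarith
    have hcx2' : φ (y (s+1)) ≤ φ ystar + ⟪g, y (s+1) - ystar⟫ := by
      rw [hneg2] at hcx2; linarith
    -- combine
    have e1 := mul_le_mul_of_nonneg_left key1 hG1pos.le
    have heq : G1 * (φ (y (s+1)) - (A/G1*A)/2 * ‖g‖ ^ 2)
        = G1 * φ (y (s+1)) - A*A/2*‖g‖ ^ 2 := by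
      field_simp
    have e2 := mul_le_mul_of_nonneg_left hcx1' hG0nn
    have e3 := mul_le_mul_of_nonneg_left hcx2' hApos.le
    have hG0eq : γ * (s:ℝ) * ((s:ℝ) + 3) / 2 = G1 - A := by
      rw [hA_def, hG1_def]; ring
    rw [hG0eq]
    nlinarith [e1, heq, e2, e3, hF4, hF5]
  -- telescoping
  have bound : ∀ t : ℕ,
      γ * (t:ℝ) * ((t:ℝ) + 3) / 2 * (φ (yh t) - φ ystar) + ‖z t - ystar‖ ^ 2 / 2
        ≤ ‖y 0 - ystar‖ ^ 2 / 2 := by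
    intro t
    induction t with
    | zero => norm_num [hz0]
    | succ s ih =>
      have hstep := step s
      push_cast
      have : γ * ((s:ℝ) + 1) * ((s:ℝ) + 1 + 3) / 2 * (φ (yh (s+1)) - φ ystar)
          + ‖z (s+1) - ystar‖ ^ 2 / 2 ≤ ‖y 0 - ystar‖ ^ 2 / 2 := le_trans hstep ih
      linarith [this]
  -- conclusion
  intro t ht
  have htR : (2:ℝ) ≤ (t:ℝ) := by exact_mod_cast ht
  have hDnn : 0 ≤ φ (yh t) - φ ystar := sub_nonneg.2 (hmin (yh t))
  have hznn : (0:ℝ) ≤ ‖z t - ystar‖ ^ 2 / 2 := by positivity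
  have hb : γ * (t:ℝ) * ((t:ℝ) + 3) / 2 * (φ (yh t) - φ ystar) ≤ ‖y 0 - ystar‖ ^ 2 / 2 := by
    linarith [bound t]
  rw [hγ] at hb
  have hTpos : (0:ℝ) < (t:ℝ) * ((t:ℝ) + 3) := by nlinarith
  rw [le_div_iff₀ hTpos]
  have hmul := mul_le_mul_of_nonneg_left hb (by positivity : (0:ℝ) ≤ 4*L)
  have hid : 4*L*(1/(2*L) * (t:ℝ) * ((t:ℝ)+3)/2 * (φ (yh t) - φ ystar))
      = (φ (yh t) - φ ystar) * ((t:ℝ)*((t:ℝ)+3)) := by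
    field_simp; ring
  have hid2 : 4*L*(‖y 0 - ystar‖ ^ 2/2) = 2*L*‖y 0 - ystar‖ ^ 2 := by ring
  linarith
end
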